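/- Let r ≥ 2 and n ≥ 1 be integers. Any family E_1, …, E_{rn−r+1} of edge sets in an r-partite r-uniform hypergraph, each with fractional matching number at least n, admits a rainbow fractional matching of size n (edges chosen from distinct E_i supporting a fractional matching of total size n). -/

import Mathlib

set_option linter.unusedSectionVars false
set_option linter.unusedVariables false

open Finset

/-- A fractional matching on the edge set `E`. -/
def FracMatching {V : Type*} [Fintype V] [DecidableEq V]
    (E : Finset (Finset V)) (f : Finset V → ℝ) : Prop :=
  (∀ e, 0 ≤ f e) ∧ (∀ e, e ∉ E → f e = 0) ∧
  ∀ v : V, ∑ e ∈ E, (if v ∈ e then f e else 0) ≤ 1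

namespace RFM

variable {V : Type*} [Fintype V] [DecidableEq V] {ι : Type*} [Fintype ι] [DecidableEq ι]

def chi (e : Finset V) : V → ℝ := fun v => if v ∈ e then 1 else 0

def Zed (σ : ι → Finset V) (l : ι → ℝ) : V → ℝ :=
  fun v => ∑ i, l i * chi (σ i) v

noncomputable def Gf (a : ℝ) (z : V → ℝ) : ℝ := ∑ v, max (z v - a) 0 ^ 2

lemma chi_nonneg (e : Finset V) (v : V) : 0 ≤ chi e v := by
  unfold chi; split <;> norm_num

lemma Zed_nonneg (σ : ι → Finset V) (l : ι → ℝ) (hl : ∀ i, 0 ≤ l i) (v : V) :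
    0 ≤ Zed σ l v :=
  Finset.sum_nonneg fun i _ => mul_nonneg (hl i) (chi_nonneg _ _)

lemma Gf_nonneg (a : ℝ) (z : V → ℝ) : 0 ≤ Gf a z :=
  Finset.sum_nonneg fun v _ => sq_nonneg _

lemma Gf_le_zero (a : ℝ) (z : V → ℝ) (h : Gf a z ≤ 0) : ∀ v, z v ≤ a := by
  intro v
  have h0 : Gf a z = 0 := le_antisymm h (Gf_nonneg a z)
  have := (Finset.sum_eq_zero_iff_of_nonneg (fun v _ => sq_nonneg _)).1 h0 v (mem_univ v)
  have h2 : max (z v - a) 0 = 0 := by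
    have := sq_eq_zero_iff.1 this
    exact this
  have := le_max_left (z v - a) 0
  rw [h2] at this
  linarith

lemma Gf_pos_exists (a : ℝ) (z : V → ℝ) (h : 0 < Gf a z) : ∃ v, a < z v := by
  by_contra hc
  push_neg at hc
  have : Gf a z = 0 := by
    unfold Gf
    apply Finset.sum_eq_zero
    intro v _
    have : max (z v - a) 0 = 0 := max_eq_right (by linarith [hc v])
    rw [this]; ring
  linarith

lemma sq_posPart_upper (a s d : ℝ) :
    max (s + d - a) 0 ^ 2 ≤ max (s - a) 0 ^ 2 + 2 * max (s - a) 0 * d + d ^ 2 := by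
  rcases max_cases (s - a) 0 with ⟨h1, h2⟩ | ⟨h1, h2⟩ <;>
    rcases max_cases (s + d - a) 0 with ⟨g1, g2⟩ | ⟨g1, g2⟩ <;>
      rw [h1, g1] <;> nlinarith

lemma Gf_upper (a : ℝ) (z d : V → ℝ) :
    Gf a (fun v => z v + d v) ≤
      Gf a z + 2 * ∑ v, max (z v - a) 0 * d v + ∑ v, d v ^ 2 := by
  unfold Gf
  rw [Finset.mul_sum, ← Finset.sum_add_distrib, ← Finset.sum_add_distrib]
  apply Finset.sum_le_sum
  intro v _
  have := sq_posPart_upper a (z v) (d v)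
  nlinarith [this]

lemma descent (a : ℝ) (z x : V → ℝ)
    (hA : ∑ v, max (z v - a) 0 * (x v - z v) < 0) :
    ∃ t : ℝ, 0 < t ∧ t ≤ 1 ∧
      Gf a (fun v => z v + t * (x v - z v)) < Gf a z := by
  set A := ∑ v, max (z v - a) 0 * (x v - z v) with hAdef
  set B := ∑ v, (x v - z v) ^ 2 with hBdef
  have hB0 : 0 ≤ B := Finset.sum_nonneg fun v _ => sq_nonneg _
  have hBpos : 0 < B := by
    rcases eq_or_lt_of_le hB0 with h | h
    · exfalso
      have hz : ∀ v ∈ (univ : Finset V), (x v - z v) ^ 2 = 0 :=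
        (Finset.sum_eq_zero_iff_of_nonneg (fun v _ => sq_nonneg _)).1 h.symm
      have : A = 0 := by
        apply Finset.sum_eq_zero
        intro v _
        have := sq_eq_zero_iff.1 (hz v (mem_univ v))
        rw [this]; ring
      linarith
    · exact h
  have hABpos : 0 < -A / B := div_pos (by linarith) hBpos
  refine ⟨min 1 (-A / B), lt_min one_pos hABpos, min_le_left _ _, ?_⟩
  set t := min 1 (-A / B) with htdef
  have ht0 : 0 < t := lt_min one_pos hABpos
  have htB : t * B ≤ -A := by
    have : t ≤ -A / B := min_le_right _ _
    calc t * B ≤ (-A / B) * B := by nlinarith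
    _ = -A := by field_simp
  have hup := Gf_upper a z (fun v => t * (x v - z v))
  have e1 : ∑ v, max (z v - a) 0 * (t * (x v - z v)) = t * A := by
    rw [hAdef, Finset.mul_sum]; apply Finset.sum_congr rfl; intro v _; ring
  have e2 : ∑ v, (t * (x v - z v)) ^ 2 = t ^ 2 * B := by
    rw [hBdef, Finset.mul_sum]; apply Finset.sum_congr rfl; intro v _; ring
  rw [e1, e2] at hup
  have : t ^ 2 * B ≤ t * (-A) := by
    have : t * (t * B) ≤ t * (-A) := by nlinarith
    nlinarith [this]
  calc Gf a (fun v => z v + t * (x v - z v)) ≤ Gf a z + 2 * (t * A) + t ^ 2 * B := hup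
  _ ≤ Gf a z + 2 * (t * A) + t * (-A) := by linarith
  _ = Gf a z + t * A := by ring
  _ < Gf a z := by nlinarith

lemma Zed_mix (σ : ι → Finset V) (l : ι → ℝ) (i₀ : ι) (t : ℝ) :
    Zed σ (fun i => (1 - t) * l i + if i = i₀ then t else 0) =
      fun v => Zed σ l v + t * (chi (σ i₀) v - Zed σ l v) := by
  funext v
  unfold Zed
  have : ∀ i, ((1 - t) * l i + if i = i₀ then t else 0) * chi (σ i) v =
      (1 - t) * (l i * chi (σ i) v) + (if i = i₀ then t * chi (σ i) v else 0) := by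
    intro i
    split <;> ring
  rw [Finset.sum_congr rfl (fun i _ => this i), Finset.sum_add_distrib,
    Finset.sum_ite_eq' univ i₀ (fun i => t * chi (σ i) v)]
  simp only [mem_univ, if_true]
  rw [← Finset.mul_sum]
  ring

lemma mix_mem_simplex (l : ι → ℝ) (hl : l ∈ stdSimplex ℝ ι) (i₀ : ι) (t : ℝ)
    (ht0 : 0 ≤ t) (ht1 : t ≤ 1) :
    (fun i => (1 - t) * l i + if i = i₀ then t else 0) ∈ stdSimplex ℝ ι := by
  constructor
  · intro i
    have h1 := hl.1 i
    dsimp only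
    split
    · nlinarith
    · nlinarith
  · rw [Finset.sum_add_distrib, ← Finset.mul_sum, hl.2,
      Finset.sum_ite_eq' univ i₀ (fun _ => t)]
    simp

lemma vertex_mem_simplex (i₀ : ι) :
    (fun i => if i = i₀ then (1:ℝ) else 0) ∈ stdSimplex ℝ ι := by
  constructor
  · intro i; dsimp only; split <;> norm_num
  · rw [Finset.sum_ite_eq' univ i₀ (fun _ => (1:ℝ))]; simp

lemma chi_part_sum {r : ℕ} (part : V → Fin r) (e : Finset V) (p : Fin r)
    (h : (e.filter fun v => part v = p).card = 1) :
    ∑ v ∈ univ.filter (fun v => part v = p), chi e v = 1 := by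
  unfold chi
  rw [Finset.sum_boole]
  rw [Finset.filter_filter]
  have : Finset.filter (fun v => part v = p ∧ v ∈ e) univ = e.filter (fun v => part v = p) := by
    ext v
    simp [and_comm]
  rw [this, h]
  norm_num

lemma load_eq {E₀ : Finset (Finset V)} (f : Finset V → ℝ) (v : V) :
    ∑ e ∈ E₀, f e * chi e v = ∑ e ∈ E₀, (if v ∈ e then f e else 0) := by
  apply Finset.sum_congr rfl
  intro e _
  unfold chi
  split <;> ring

lemma exists_good_edge {n : ℕ} (hn : 1 ≤ n) (E₀ : Finset (Finset V))
    (hfm : ∃ f, FracMatching E₀ f ∧ (n : ℝ) ≤ ∑ e ∈ E₀, f e)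
    (z : V → ℝ) (hz : ∀ v, 0 ≤ z v) (hS : ∃ v, 1 / (n:ℝ) < z v) :
    ∃ e ∈ E₀, ∑ v, chi e v * max (z v - 1/(n:ℝ)) 0 <
      ∑ v, z v * max (z v - 1/(n:ℝ)) 0 := by
  obtain ⟨f, ⟨hf0, hfsupp, hfload⟩, hfsize⟩ := hfm
  set a := 1/(n:ℝ) with ha
  have hnpos : (0:ℝ) < n := by exact_mod_cast Nat.pos_of_ne_zero (by omega)
  set p := fun v => max (z v - a) 0 with hp
  have hp0 : ∀ v, 0 ≤ p v := fun v => le_max_right _ _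
  set ct := ∑ v, z v * p v with hct
  by_contra hc
  push_neg at hc
  -- key strict inequality : (n:ℝ) * ct > ∑ v, p v
  obtain ⟨v₀, hv₀⟩ := hS
  have hkey : ∑ v, p v < (n:ℝ) * ct := by
    have h1 : ∀ v, a * p v ≤ z v * p v := by
      intro v
      rcases le_or_gt (z v) a with h | h
      · have : p v = 0 := max_eq_right (by linarith)
        rw [this]; ring_nf; exact le_refl _
      · nlinarith [hp0 v]
    have h2 : a * p v₀ < z v₀ * p v₀ := by
      have hpv : 0 < p v₀ := lt_max_iff.2 (Or.inl (by linarith))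
      nlinarith
    have h3 : ∑ v, a * p v < ct := by
      rw [hct]
      apply Finset.sum_lt_sum (fun v _ => h1 v) ⟨v₀, mem_univ v₀, h2⟩
    have h4 : ∑ v, a * p v = (∑ v, p v) / n := by
      rw [← Finset.mul_sum, ha]
      field_simp
    rw [h4] at h3
    calc ∑ v, p v = ((∑ v, p v) / n) * n := by field_simp
    _ < ct * n := by
        apply mul_lt_mul_of_pos_right h3 hnpos
    _ = (n:ℝ) * ct := by ring
  have hct0 : 0 ≤ ct := Finset.sum_nonneg fun v _ => mul_nonneg (hz v) (hp0 v)
  -- upper bound : ∑_e f e * (dot e) ≤ ∑ v, p v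
  have hub : ∑ e ∈ E₀, f e * (∑ v, chi e v * p v) ≤ ∑ v, p v := by
    have swap : ∑ e ∈ E₀, f e * (∑ v, chi e v * p v) =
        ∑ v, (∑ e ∈ E₀, f e * chi e v) * p v := by
      simp_rw [Finset.mul_sum, Finset.sum_mul]
      rw [Finset.sum_comm]
      apply Finset.sum_congr rfl; intro v _
      apply Finset.sum_congr rfl; intro e _
      ring
    rw [swap]
    apply Finset.sum_le_sum
    intro v _
    have hload : ∑ e ∈ E₀, f e * chi e v ≤ 1 := by
      rw [load_eq]; exact hfload v
    calc (∑ e ∈ E₀, f e * chi e v) * p v ≤ 1 * p v :=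
          mul_le_mul_of_nonneg_right hload (hp0 v)
    _ = p v := one_mul _
  have hlb : ct * (∑ e ∈ E₀, f e) ≤ ∑ e ∈ E₀, f e * (∑ v, chi e v * p v) := by
    rw [Finset.mul_sum]
    apply Finset.sum_le_sum
    intro e he
    calc ct * f e = f e * ct := mul_comm _ _
    _ ≤ f e * (∑ v, chi e v * p v) := mul_le_mul_of_nonneg_left (hc e he) (hf0 e)
  have hn2 : ct * (n:ℝ) ≤ ct * (∑ e ∈ E₀, f e) := mul_le_mul_of_nonneg_left hfsize hct0
  nlinarith [hub, hlb, hkey, hn2]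

lemma build_rainbow {r n : ℕ} (hn : 1 ≤ n) (E : Fin (r * n - r + 1) → Finset (Finset V))
    (σ : Fin (r * n - r + 1) → Finset V) (hσ : ∀ i, σ i ∈ E i)
    (l : Fin (r * n - r + 1) → ℝ) (hl : l ∈ stdSimplex ℝ (Fin (r * n - r + 1)))
    (hz : ∀ v, Zed σ l v ≤ 1 / (n : ℝ)) :
    ∃ (F : Finset (Finset V)) (c : Finset V → Fin (r * n - r + 1)),
      Set.InjOn c ↑F ∧ (∀ e ∈ F, e ∈ E (c e)) ∧
      ∃ f, FracMatching F f ∧ ∑ e ∈ F, f e = (n : ℝ) := by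
  classical
  have hnR : (0:ℝ) < n := by exact_mod_cast Nat.pos_of_ne_zero (by omega)
  set F : Finset (Finset V) := univ.image σ with hF
  have hex : ∀ e ∈ F, ∃ i, σ i = e := by
    intro e he
    obtain ⟨i, _, rfl⟩ := Finset.mem_image.1 he
    exact ⟨i, rfl⟩
  set c : Finset V → Fin (r * n - r + 1) := fun e =>
    if h : ∃ i, σ i = e then h.choose else ⟨0, Nat.succ_pos _⟩ with hc
  have hcs : ∀ e ∈ F, σ (c e) = e := by
    intro e he
    have h := hex e he
    simp only [hc, dif_pos h]
    exact h.choose_spec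
  set f : Finset V → ℝ := fun e =>
    if e ∈ F then (n : ℝ) * ∑ i ∈ univ.filter (fun i => σ i = e), l i else 0 with hf
  have hfib : ∀ g : Fin (r * n - r + 1) → ℝ,
      ∑ e ∈ F, ∑ i ∈ univ.filter (fun i => σ i = e), g i = ∑ i, g i := by
    intro g
    exact Finset.sum_fiberwise_of_maps_to (fun i _ => Finset.mem_image_of_mem σ (mem_univ i)) g
  refine ⟨F, c, ?_, ?_, f, ⟨?_, ?_, ?_⟩, ?_⟩
  · intro e₁ he₁ e₂ he₂ hce
    rw [← hcs e₁ he₁, ← hcs e₂ he₂, hce]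
  · intro e he
    have h2 := hσ (c e)
    rwa [hcs e he] at h2
  · intro e
    simp only [hf]
    split
    · exact mul_nonneg (le_of_lt hnR) (Finset.sum_nonneg fun i _ => hl.1 i)
    · exact le_refl _
  · intro e he
    simp only [hf]
    exact if_neg he
  · intro v
    have step1 : ∑ e ∈ F, (if v ∈ e then f e else 0) =
        ∑ e ∈ F, ∑ i ∈ univ.filter (fun i => σ i = e), (if v ∈ σ i then (n:ℝ) * l i else 0) := by
      apply Finset.sum_congr rfl
      intro e he
      simp only [hf, if_pos he]
      by_cases hv : v ∈ e
      · rw [if_pos hv, Finset.mul_sum]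
        apply Finset.sum_congr rfl
        intro i hi
        have : σ i = e := (Finset.mem_filter.1 hi).2
        rw [if_pos (this ▸ hv)]
      · rw [if_neg hv]
        symm
        apply Finset.sum_eq_zero
        intro i hi
        have : σ i = e := (Finset.mem_filter.1 hi).2
        rw [if_neg (this ▸ hv)]
    rw [step1, hfib]
    have : ∑ i, (if v ∈ σ i then (n:ℝ) * l i else 0) = (n:ℝ) * Zed σ l v := by
      rw [Zed, Finset.mul_sum]
      apply Finset.sum_congr rfl
      intro i _
      rw [chi]
      split <;> ring
    rw [this]
    calc (n:ℝ) * Zed σ l v ≤ (n:ℝ) * (1/(n:ℝ)) :=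
          mul_le_mul_of_nonneg_left (hz v) (le_of_lt hnR)
    _ = 1 := by field_simp
  · have step1 : ∑ e ∈ F, f e =
        ∑ e ∈ F, ∑ i ∈ univ.filter (fun i => σ i = e), (n:ℝ) * l i := by
      apply Finset.sum_congr rfl
      intro e he
      simp only [hf, if_pos he]
      rw [Finset.mul_sum]
    rw [step1, hfib, ← Finset.mul_sum, hl.2, mul_one]

lemma exists_Uj {n : ℕ} (hn : 1 ≤ n) (P : Finset V) (z : V → ℝ)
    (σ : ι → Finset V) (l : ι → ℝ)
    (hz : ∀ v, z v = ∑ i, l i * chi (σ i) v)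
    (hlpos : ∀ i, 0 < l i)
    (hzsum : ∑ v ∈ P, z v = 1)
    (hchi : ∀ i, ∑ v ∈ P, chi (σ i) v = 1)
    (hz0 : ∀ v, 0 ≤ z v) :
    ∃ U : Finset V, U ⊆ P.filter (fun v => 1/(n:ℝ) ≤ z v) ∧ U.card ≤ n - 1 ∧
      (∀ v ∈ P, 1/(n:ℝ) < z v → v ∈ U) ∧
      ∀ γ : ι → ℝ, (∑ i, γ i = 0) → (∀ v ∈ U, ∑ i, γ i * chi (σ i) v = 0) →
        ∀ v ∈ P, 1/(n:ℝ) ≤ z v → ∑ i, γ i * chi (σ i) v = 0 := by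
  classical
  have hnR : (0:ℝ) < n := by exact_mod_cast Nat.pos_of_ne_zero (by omega)
  set a : ℝ := 1/(n:ℝ) with ha
  set WP : Finset V := P.filter (fun v => a ≤ z v) with hWP
  rcases lt_or_ge WP.card n with hcard | hcard
  · refine ⟨WP, le_refl _, by omega, ?_, ?_⟩
    · intro v hv hlt
      exact Finset.mem_filter.2 ⟨hv, le_of_lt hlt⟩
    · intro γ _ hU0 v hv hle
      exact hU0 v (Finset.mem_filter.2 ⟨hv, hle⟩)
  · -- flat case
    have hsub : WP ⊆ P := Finset.filter_subset _ _
    have h2 : ∑ v ∈ WP, z v ≤ 1 := by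
      rw [← hzsum]
      exact Finset.sum_le_sum_of_subset_of_nonneg hsub (fun v _ _ => hz0 v)
    have h1 : (WP.card : ℝ) * a ≤ ∑ v ∈ WP, z v := by
      have := Finset.card_nsmul_le_sum WP z a (fun v hv => (Finset.mem_filter.1 hv).2)
      simpa [nsmul_eq_mul] using this
    have hcard' : WP.card = n := by
      by_contra hne
      have hge : (n:ℝ) + 1 ≤ (WP.card : ℝ) := by
        have : n + 1 ≤ WP.card := by omega
        exact_mod_cast this
      have : ((n:ℝ) + 1) * a ≤ 1 := by nlinarith
      rw [ha] at this
      have h3 : ((n:ℝ) + 1) * (1/(n:ℝ)) = 1 + 1/(n:ℝ) := by field_simp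
      rw [h3] at this
      have : (0:ℝ) < 1/(n:ℝ) := by positivity
      linarith
    have hflatsum : ∑ v ∈ WP, z v = 1 := by
      have : (WP.card : ℝ) * a = 1 := by
        rw [hcard', ha]; field_simp
      linarith
    have hzero : ∀ v ∈ P, v ∉ WP → z v = 0 := by
      intro v hv hvW
      have hsd : ∑ v ∈ P \ WP, z v = 0 := by
        have := Finset.sum_sdiff (f := z) hsub
        linarith
      have := (Finset.sum_eq_zero_iff_of_nonneg (fun v _ => hz0 v)).1 hsd v
        (Finset.mem_sdiff.2 ⟨hv, hvW⟩)
      exact this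
    have hexact : ∀ v ∈ WP, z v = a := by
      intro v hv
      have hs0 : ∑ v ∈ WP, (z v - a) = 0 := by
        rw [Finset.sum_sub_distrib, hflatsum, Finset.sum_const, hcard']
        rw [ha]
        rw [nsmul_eq_mul, mul_one_div_cancel (ne_of_gt hnR), sub_self]
      have := (Finset.sum_eq_zero_iff_of_nonneg
        (fun w hw => by linarith [(Finset.mem_filter.1 hw).2])).1 hs0 v hv
      linarith
    have hchiT : ∀ i, ∀ v ∈ P, v ∉ WP → chi (σ i) v = 0 := by
      intro i v hv hvW
      have h0 : ∑ k, l k * chi (σ k) v = 0 := by rw [← hz v]; exact hzero v hv hvW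
      have := (Finset.sum_eq_zero_iff_of_nonneg
        (fun k _ => mul_nonneg (le_of_lt (hlpos k)) (chi_nonneg _ _))).1 h0 i (mem_univ i)
      have hl0 : l i ≠ 0 := ne_of_gt (hlpos i)
      exact (mul_eq_zero.1 this).resolve_left hl0
    have hchiW : ∀ i, ∑ v ∈ WP, chi (σ i) v = 1 := by
      intro i
      rw [← hchi i, ← Finset.sum_sdiff hsub]
      have : ∑ v ∈ P \ WP, chi (σ i) v = 0 := by
        apply Finset.sum_eq_zero
        intro v hv
        have hm := Finset.mem_sdiff.1 hv
        exact hchiT i v hm.1 hm.2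
      rw [this, zero_add]
    have hWPne : WP.Nonempty := by
      rw [← Finset.card_pos, hcard']; omega
    obtain ⟨v0, hv0⟩ := hWPne
    refine ⟨WP.erase v0, (Finset.erase_subset _ _).trans (le_refl _), ?_, ?_, ?_⟩
    · rw [Finset.card_erase_of_mem hv0, hcard']
    · intro v hv hlt
      exfalso
      have : v ∈ WP := Finset.mem_filter.2 ⟨hv, le_of_lt hlt⟩
      have := hexact v this
      rw [this] at hlt
      exact lt_irrefl _ hlt
    · intro γ hγsum hU0 v hvP hvle
      have hWsum : ∑ v ∈ WP, (∑ i, γ i * chi (σ i) v) = 0 := by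
        rw [Finset.sum_comm]
        calc ∑ i, ∑ v ∈ WP, γ i * chi (σ i) v
            = ∑ i, γ i * ∑ v ∈ WP, chi (σ i) v := by
              apply Finset.sum_congr rfl; intro i _; rw [Finset.mul_sum]
        _ = ∑ i, γ i := by
              apply Finset.sum_congr rfl; intro i _; rw [hchiW i, mul_one]
        _ = 0 := hγsum
      have hv0' : ∑ i, γ i * chi (σ i) v0 = 0 := by
        have := Finset.add_sum_erase WP (fun v => ∑ i, γ i * chi (σ i) v) hv0
        have herase : ∑ v ∈ WP.erase v0, (∑ i, γ i * chi (σ i) v) = 0 :=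
          Finset.sum_eq_zero (fun v hv => hU0 v hv)
        rw [herase] at this
        linarith [this, hWsum]
      have hvWP : v ∈ WP := Finset.mem_filter.2 ⟨hvP, hvle⟩
      by_cases hvv : v = v0
      · rw [hvv]; exact hv0'
      · exact hU0 v (Finset.mem_erase.2 ⟨hvv, hvWP⟩)

end RFM

open RFM in
/-- Any family of `rn - r + 1` edge sets in an `r`-partite hypergraph (with partition
given by `part : V → Fin r`, every edge meeting each part exactly once), each with
fractional matching number at least `n`, has a rainbow fractional matching of size `n`. -/
theorem rainbow_fracMatching_rpartite {V : Type*} [Fintype V] [DecidableEq V]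
    (r n : ℕ) (hr : 2 ≤ r) (hn : 1 ≤ n) (part : V → Fin r)
    (E : Fin (r * n - r + 1) → Finset (Finset V))
    (hEpart : ∀ i, ∀ e ∈ E i, ∀ p : Fin r, (e.filter fun v => part v = p).card = 1)
    (hν : ∀ i, ∃ f, FracMatching (E i) f ∧ (n : ℝ) ≤ ∑ e ∈ E i, f e) :
    ∃ (F : Finset (Finset V)) (c : Finset V → Fin (r * n - r + 1)),
      Set.InjOn c ↑F ∧ (∀ e ∈ F, e ∈ E (c e)) ∧
      ∃ f, FracMatching F f ∧ ∑ e ∈ F, f e = (n : ℝ) := by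
  classical
  have hnR : (0:ℝ) < n := by exact_mod_cast Nat.pos_of_ne_zero (by omega)
  have hEne : ∀ i, ∃ e, e ∈ E i := by
    intro i
    obtain ⟨f, ⟨hf0, hfsupp, _⟩, hfsize⟩ := hν i
    by_contra hc
    push_neg at hc
    have hzero : ∑ e ∈ E i, f e = 0 := Finset.sum_eq_zero (fun e he => absurd he (hc e))
    rw [hzero] at hfsize
    have : (1:ℝ) ≤ (n:ℝ) := by exact_mod_cast hn
    linarith
  haveI hSelNe : Nonempty (∀ i : Fin (r*n-r+1), {e // e ∈ E i}) :=
    ⟨fun i => ⟨(hEne i).choose, (hEne i).choose_spec⟩⟩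
  have hcont : ∀ σ : (∀ i : Fin (r*n-r+1), {e // e ∈ E i}),
      Continuous (fun l : Fin (r*n-r+1) → ℝ => Gf (1/(n:ℝ)) (Zed (fun i => (σ i).1) l)) := by
    intro σ
    unfold Gf Zed
    apply continuous_finset_sum
    intro v _
    apply Continuous.pow
    apply Continuous.max
    · apply Continuous.sub _ continuous_const
      apply continuous_finset_sum
      intro i _
      exact (continuous_apply i).mul continuous_const
    · exact continuous_const
  have hmin : ∀ σ : (∀ i : Fin (r*n-r+1), {e // e ∈ E i}),
      ∃ l ∈ stdSimplex ℝ (Fin (r*n-r+1)), ∀ l' ∈ stdSimplex ℝ (Fin (r*n-r+1)),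
        Gf (1/(n:ℝ)) (Zed (fun i => (σ i).1) l) ≤ Gf (1/(n:ℝ)) (Zed (fun i => (σ i).1) l') := by
    intro σ
    obtain ⟨l, hlmem, hlmin⟩ := (isCompact_stdSimplex ℝ (Fin (r*n-r+1))).exists_isMinOn
      ⟨_, vertex_mem_simplex ⟨0, Nat.succ_pos _⟩⟩ ((hcont σ).continuousOn)
    exact ⟨l, hlmem, fun l' hl' => isMinOn_iff.1 hlmin l' hl'⟩
  choose lmin hlmem hlmin using hmin
  obtain ⟨σs, -, hσs⟩ := Finset.exists_min_image
    (univ : Finset (∀ i : Fin (r*n-r+1), {e // e ∈ E i}))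
    (fun σ => Gf (1/(n:ℝ)) (Zed (fun i => (σ i).1) (lmin σ))) univ_nonempty
  set σv : Fin (r*n-r+1) → Finset V := fun i => (σs i).1 with hσv
  set D : ℝ := Gf (1/(n:ℝ)) (Zed σv (lmin σs)) with hDdef
  have hglobal : ∀ σ : (∀ i : Fin (r*n-r+1), {e // e ∈ E i}),
      ∀ l ∈ stdSimplex ℝ (Fin (r*n-r+1)), D ≤ Gf (1/(n:ℝ)) (Zed (fun i => (σ i).1) l) := by
    intro σ l hl
    exact le_trans (hσs σ (mem_univ σ)) (hlmin σ l hl)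
  rcases le_or_gt D 0 with hD0 | hD0
  · exact build_rainbow hn E σv (fun i => (σs i).2) (lmin σs) (hlmem σs)
      (Gf_le_zero _ _ hD0)
  exfalso
  by_cases h0 : ∃ l ∈ stdSimplex ℝ (Fin (r*n-r+1)),
      Gf (1/(n:ℝ)) (Zed σv l) ≤ D ∧ ∃ j, l j = 0
  · -- SWAP branch
    obtain ⟨l, hlΔ, hlD, j, hlj⟩ := h0
    have hz0 : ∀ v, 0 ≤ Zed σv l v := Zed_nonneg σv l hlΔ.1
    have hGz : 0 < Gf (1/(n:ℝ)) (Zed σv l) := lt_of_lt_of_le hD0 (hglobal σs l hlΔ)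
    have hSex : ∃ v, 1/(n:ℝ) < Zed σv l v := Gf_pos_exists _ _ hGz
    obtain ⟨e', he', hdot⟩ := exists_good_edge hn (E j) (hν j) (Zed σv l) hz0 hSex
    set σ' := Function.update σs j (⟨e', he'⟩ : {e // e ∈ E j}) with hσ'
    have hZeq : Zed (fun i => (σ' i).1) l = Zed σv l := by
      funext v
      unfold Zed
      apply Finset.sum_congr rfl
      intro i _
      by_cases hij : i = j
      · subst hij; rw [hlj]; simp
      · simp only [hσ', Function.update_of_ne hij, hσv]
    have hA : ∑ v, max (Zed σv l v - 1/(n:ℝ)) 0 * (chi e' v - Zed σv l v) < 0 := by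
      have hsplit : ∑ v, max (Zed σv l v - 1/(n:ℝ)) 0 * (chi e' v - Zed σv l v)
          = (∑ v, chi e' v * max (Zed σv l v - 1/(n:ℝ)) 0)
            - ∑ v, Zed σv l v * max (Zed σv l v - 1/(n:ℝ)) 0 := by
        rw [← Finset.sum_sub_distrib]
        apply Finset.sum_congr rfl
        intro v _
        ring
      rw [hsplit]
      linarith
    obtain ⟨t, ht0, ht1, hlt⟩ := descent _ _ _ hA
    have hmem := mix_mem_simplex l hlΔ j t (le_of_lt ht0) ht1
    have hgl := hglobal σ' _ hmem
    have hj : ((σ' j).1 : Finset V) = e' := by rw [hσ', Function.update_self]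
    rw [Zed_mix] at hgl
    simp only [hj, hZeq] at hgl
    have := lt_of_le_of_lt hgl hlt
    linarith
  · -- WALK branch
    push_neg at h0
    set Tc : (Fin (r*n-r+1) → ℝ) → ℕ :=
      fun l => (univ.filter (fun v => Zed σv l v = 1/(n:ℝ))).card with hTc
    set K : Finset ℕ := (Finset.range (Fintype.card V + 1)).filter
      (fun k => ∃ l ∈ stdSimplex ℝ (Fin (r*n-r+1)),
        Gf (1/(n:ℝ)) (Zed σv l) ≤ D ∧ Tc l = k) with hK
    have hTcle : ∀ l, Tc l ≤ Fintype.card V := by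
      intro l
      simp only [hTc]
      exact (Finset.card_filter_le _ _).trans (le_of_eq (Finset.card_univ))
    have hKne : K.Nonempty := by
      refine ⟨Tc (lmin σs), Finset.mem_filter.2 ⟨Finset.mem_range.2 ?_,
        lmin σs, hlmem σs, le_of_eq hDdef.symm, rfl⟩⟩
      have := hTcle (lmin σs)
      omega
    obtain ⟨lm, hlmΔ, hlmD, hlmTc⟩ :
        ∃ lm ∈ stdSimplex ℝ (Fin (r*n-r+1)), Gf (1/(n:ℝ)) (Zed σv lm) ≤ D ∧
          ∀ l' ∈ stdSimplex ℝ (Fin (r*n-r+1)),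
            Gf (1/(n:ℝ)) (Zed σv l') ≤ D → Tc l' ≤ Tc lm := by
      obtain ⟨l₁, hl₁Δ, hl₁D, hl₁k⟩ := (Finset.mem_filter.1 (K.max'_mem hKne)).2
      refine ⟨l₁, hl₁Δ, hl₁D, ?_⟩
      intro l' hl'Δ hl'D
      rw [hl₁k]
      apply Finset.le_max'
      refine Finset.mem_filter.2 ⟨Finset.mem_range.2 ?_, l', hl'Δ, hl'D, rfl⟩
      have := hTcle l'
      omega
    set z : V → ℝ := Zed σv lm with hzdef
    set p : V → ℝ := fun v => max (z v - 1/(n:ℝ)) 0 with hpdef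
    have hzD : Gf (1/(n:ℝ)) z = D := le_antisymm hlmD (hglobal σs lm hlmΔ)
    have hz0 : ∀ v, 0 ≤ z v := Zed_nonneg σv lm hlmΔ.1
    have hp0 : ∀ v, 0 ≤ p v := fun v => le_max_right _ _
    have hlmpos : ∀ i, 0 < lm i := by
      intro i
      rcases (hlmΔ.1 i).lt_or_eq with h | h
      · exact h
      · exact absurd h.symm (h0 lm hlmΔ hlmD i)
    obtain ⟨v₀, hv₀⟩ : ∃ v, 1/(n:ℝ) < z v := Gf_pos_exists _ _ (by rw [hzD]; exact hD0)
    set ct : ℝ := ∑ v, z v * p v with hct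
    have hctpos : 0 < ct := by
      have h1 : ∀ v ∈ (univ : Finset V), 0 ≤ z v * p v :=
        fun v _ => mul_nonneg (hz0 v) (hp0 v)
      have hpv₀ : 0 < p v₀ := lt_max_iff.2 (Or.inl (by linarith))
      have hzv₀ : 0 < z v₀ := lt_trans (by positivity) hv₀
      have h2 : 0 < z v₀ * p v₀ := mul_pos hzv₀ hpv₀
      calc (0:ℝ) < z v₀ * p v₀ := h2
      _ ≤ ct := Finset.single_le_sum h1 (mem_univ v₀)
    have hpS : ∀ v, 0 < p v → 1/(n:ℝ) < z v := by
      intro v hv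
      by_contra hc
      push_neg at hc
      have h1 : p v = 0 := max_eq_right (by linarith)
      rw [h1] at hv; exact lt_irrefl _ hv
    -- active inequalities
    have hact_ge : ∀ i, ct ≤ ∑ v, chi (σv i) v * p v := by
      intro i
      by_contra hlt
      push_neg at hlt
      have hA : ∑ v, max (z v - 1/(n:ℝ)) 0 * (chi (σv i) v - z v) < 0 := by
        have hsplit : ∑ v, max (z v - 1/(n:ℝ)) 0 * (chi (σv i) v - z v)
            = (∑ v, chi (σv i) v * p v) - ct := by
          rw [hct, ← Finset.sum_sub_distrib]
          apply Finset.sum_congr rfl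
          intro v _
          simp only [hpdef]
          ring
        rw [hsplit]; linarith
      obtain ⟨t, ht0, ht1, hlt2⟩ := descent _ _ _ hA
      have hmem := mix_mem_simplex lm hlmΔ i t (le_of_lt ht0) ht1
      have hgl := hglobal σs _ hmem
      rw [Zed_mix] at hgl
      simp only [← hσv, ← hzdef] at hgl
      have := lt_of_le_of_lt hgl hlt2
      rw [hzD] at this
      exact lt_irrefl _ this
    have hact_eq : ∀ i, ∑ v, chi (σv i) v * p v = ct := by
      have hzsum : ∑ i, lm i * (∑ v, chi (σv i) v * p v) = ct := by
        rw [hct]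
        simp_rw [Finset.mul_sum]
        rw [Finset.sum_comm]
        apply Finset.sum_congr rfl
        intro v _
        rw [hzdef]
        simp only [Zed]
        rw [Finset.sum_mul]
        apply Finset.sum_congr rfl
        intro i _
        ring
      have key : ∑ i, lm i * ((∑ v, chi (σv i) v * p v) - ct) = 0 := by
        have expand : ∀ i, lm i * ((∑ v, chi (σv i) v * p v) - ct)
            = lm i * (∑ v, chi (σv i) v * p v) - lm i * ct := fun i => by ring
        rw [Finset.sum_congr rfl (fun i _ => expand i), Finset.sum_sub_distrib, hzsum,
          ← Finset.sum_mul, hlmΔ.2, one_mul, sub_self]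
      intro i
      have hterm := (Finset.sum_eq_zero_iff_of_nonneg
        (fun i _ => mul_nonneg (le_of_lt (hlmpos i))
          (by linarith [hact_ge i]))).1 key i (mem_univ i)
      have h2 := (mul_eq_zero.1 hterm).resolve_left (ne_of_gt (hlmpos i))
      linarith
    -- part sums
    have hPsum : ∀ q : Fin r, ∑ v ∈ univ.filter (fun v => part v = q), z v = 1 := by
      intro q
      rw [hzdef]
      simp only [Zed]
      rw [Finset.sum_comm]
      have e1 : ∀ i, ∑ v ∈ univ.filter (fun v => part v = q), lm i * chi (σv i) v = lm i := by
        intro i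
        rw [← Finset.mul_sum, chi_part_sum part (σv i) q (hEpart i (σv i) (σs i).2 q), mul_one]
      rw [Finset.sum_congr rfl (fun i _ => e1 i), hlmΔ.2]
    have hchiP : ∀ i, ∀ q : Fin r,
        ∑ v ∈ univ.filter (fun v => part v = q), chi (σv i) v = 1 :=
      fun i q => chi_part_sum part (σv i) q (hEpart i (σv i) (σs i).2 q)
    -- per-part reduced sets
    have hUex : ∀ q : Fin r, ∃ U : Finset V,
        U ⊆ (univ.filter (fun v => part v = q)).filter (fun v => 1/(n:ℝ) ≤ z v) ∧
        U.card ≤ n - 1 ∧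
        (∀ v ∈ univ.filter (fun v => part v = q), 1/(n:ℝ) < z v → v ∈ U) ∧
        ∀ γ : Fin (r*n-r+1) → ℝ, (∑ i, γ i = 0) →
          (∀ v ∈ U, ∑ i, γ i * chi (σv i) v = 0) →
          ∀ v ∈ univ.filter (fun v => part v = q), 1/(n:ℝ) ≤ z v →
            ∑ i, γ i * chi (σv i) v = 0 := by
      intro q
      exact exists_Uj hn _ z σv lm (fun v => rfl) hlmpos (hPsum q) (fun i => hchiP i q) hz0
    choose Uq hUsub hUcard hUS hUrec using hUex
    set U : Finset V := univ.biUnion Uq with hU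
    have hUcard' : U.card ≤ r * (n-1) :=
      calc U.card ≤ ∑ q, (Uq q).card := Finset.card_biUnion_le
      _ ≤ ∑ _q : Fin r, (n-1) := Finset.sum_le_sum (fun q _ => hUcard q)
      _ = r * (n-1) := by rw [Finset.sum_const, Finset.card_univ, Fintype.card_fin, smul_eq_mul]
    have hmulnat : r * (n-1) = r*n - r := by
      cases n with
      | zero => omega
      | succ m => simp [Nat.mul_succ]
    have hUlt : U.card < r*n - r + 1 :=
      lt_of_le_of_lt (hUcard'.trans (le_of_eq hmulnat)) (Nat.lt_succ_self _)
    -- linear dependence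
    set Φ : (Fin (r*n-r+1) → ℝ) →ₗ[ℝ] ({v // v ∈ U} → ℝ) :=
      { toFun := fun γ u => ∑ i, γ i * chi (σv i) u.1
        map_add' := by
          intro γ₁ γ₂; funext u
          simp [add_mul, Finset.sum_add_distrib]
        map_smul' := by
          intro cc γ; funext u
          simp [Finset.mul_sum, mul_assoc] } with hΦ
    have hninj : ¬ Function.Injective Φ := by
      intro hinj
      have h1 := LinearMap.finrank_le_finrank_of_injective hinj
      rw [Module.finrank_fintype_fun_eq_card, Module.finrank_fintype_fun_eq_card,
        Fintype.card_fin, Fintype.card_coe] at h1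
      omega
    obtain ⟨γ₁, γ₂, hγeq, hγne⟩ := Function.not_injective_iff.1 hninj
    set γ : Fin (r*n-r+1) → ℝ := γ₁ - γ₂ with hγ
    have hγ0 : γ ≠ 0 := sub_ne_zero.2 hγne
    have hΦγ : ∀ v ∈ U, ∑ i, γ i * chi (σv i) v = 0 := by
      intro v hv
      have h2 : Φ γ = 0 := by rw [hγ, map_sub, hγeq, sub_self]
      have h3 : (∑ i, γ i * chi (σv i) v) = Φ γ ⟨v, hv⟩ := rfl
      rw [h3, h2]
      rfl
    have hγsum : ∑ i, γ i = 0 := by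
      have h1 : ct * ∑ i, γ i = 0 := by
        calc ct * ∑ i, γ i = ∑ i, γ i * ct := by rw [← Finset.sum_mul]; ring
        _ = ∑ i, γ i * ∑ v, chi (σv i) v * p v :=
            Finset.sum_congr rfl (fun i _ => by rw [hact_eq i])
        _ = ∑ v, (∑ i, γ i * chi (σv i) v) * p v := by
            simp_rw [Finset.mul_sum, Finset.sum_mul]
            rw [Finset.sum_comm]
            apply Finset.sum_congr rfl
            intro v _
            apply Finset.sum_congr rfl
            intro i _
            ring
        _ = 0 := by
            apply Finset.sum_eq_zero
            intro v _
            rcases eq_or_lt_of_le (hp0 v) with h | h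
            · rw [← h]; ring
            · have hvU : v ∈ U := Finset.mem_biUnion.2 ⟨part v, mem_univ _,
                hUS (part v) v (Finset.mem_filter.2 ⟨mem_univ v, rfl⟩) (hpS v h)⟩
              rw [hΦγ v hvU]; ring
      exact (mul_eq_zero.1 h1).resolve_left (ne_of_gt hctpos)
    have hδW : ∀ v, 1/(n:ℝ) ≤ z v → ∑ i, γ i * chi (σv i) v = 0 := by
      intro v hv
      refine hUrec (part v) γ hγsum ?_ v (Finset.mem_filter.2 ⟨mem_univ v, rfl⟩) hv
      intro u hu
      exact hΦγ u (Finset.mem_biUnion.2 ⟨part v, mem_univ _, hu⟩)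
    have hγneg : ∃ i, γ i < 0 := by
      by_contra hc
      push_neg at hc
      have hall : ∀ i ∈ (univ : Finset (Fin (r*n-r+1))), γ i = 0 :=
        (Finset.sum_eq_zero_iff_of_nonneg (fun i _ => hc i)).1 hγsum
      exact hγ0 (funext fun i => hall i (mem_univ i))
    set δ : V → ℝ := fun v => ∑ i, γ i * chi (σv i) v with hδ
    set tA : Finset ℝ := (univ.filter (fun i => γ i < 0)).image (fun i => lm i / (-γ i)) with htA
    set tB : Finset ℝ := (univ.filter (fun v => z v < 1/(n:ℝ) ∧ 0 < δ v)).image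
      (fun v => (1/(n:ℝ) - z v) / δ v) with htB
    set ts : Finset ℝ := tA ∪ tB with hts
    have htsne : ts.Nonempty := by
      obtain ⟨i, hi⟩ := hγneg
      exact ⟨lm i / (-γ i), Finset.mem_union_left _
        (Finset.mem_image.2 ⟨i, Finset.mem_filter.2 ⟨mem_univ i, hi⟩, rfl⟩)⟩
    obtain ⟨tb, htbmem, htbmin⟩ : ∃ tb ∈ ts, ∀ x ∈ ts, tb ≤ x :=
      ⟨ts.min' htsne, ts.min'_mem htsne, fun x hx => ts.min'_le x hx⟩
    have htpos : ∀ x ∈ ts, 0 < x := by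
      intro x hx
      rcases Finset.mem_union.1 hx with h | h
      · obtain ⟨i, hi, rfl⟩ := Finset.mem_image.1 h
        have hγi := (Finset.mem_filter.1 hi).2
        exact div_pos (hlmpos i) (by linarith)
      · obtain ⟨v, hv, rfl⟩ := Finset.mem_image.1 h
        obtain ⟨h1, h2⟩ := (Finset.mem_filter.1 hv).2
        exact div_pos (by linarith) h2
    have htbpos : 0 < tb := htpos tb htbmem
    set l' : Fin (r*n-r+1) → ℝ := fun i => lm i + tb * γ i with hl'
    have hl'0 : ∀ i, 0 ≤ l' i := by
      intro i
      simp only [hl']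
      rcases le_or_gt 0 (γ i) with h | h
      · have h2 : 0 ≤ tb * γ i := mul_nonneg (le_of_lt htbpos) h
        linarith [hlmpos i]
      · have hmem : lm i / (-γ i) ∈ ts := Finset.mem_union_left _
          (Finset.mem_image.2 ⟨i, Finset.mem_filter.2 ⟨mem_univ i, h⟩, rfl⟩)
        have hle := htbmin _ hmem
        have hpos : 0 < -γ i := by linarith
        have h2 := (le_div_iff₀ hpos).1 hle
        have h3 : tb * -γ i = -(tb * γ i) := by ring
        rw [h3] at h2
        linarith
    have hl'Δ : l' ∈ stdSimplex ℝ (Fin (r*n-r+1)) := by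
      refine ⟨hl'0, ?_⟩
      simp only [hl']
      rw [Finset.sum_add_distrib, ← Finset.mul_sum, hγsum, hlmΔ.2, mul_zero, add_zero]
    have hz' : ∀ v, Zed σv l' v = z v + tb * δ v := by
      intro v
      rw [hzdef]
      simp only [hl', hδ, Zed]
      rw [Finset.mul_sum, ← Finset.sum_add_distrib]
      apply Finset.sum_congr rfl
      intro i _
      ring
    have hWfix : ∀ v, 1/(n:ℝ) ≤ z v → Zed σv l' v = z v := by
      intro v hv
      have hd0 : δ v = 0 := hδW v hv
      rw [hz' v, hd0]
      ring
    have hle' : ∀ v, z v < 1/(n:ℝ) → Zed σv l' v ≤ 1/(n:ℝ) := by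
      intro v hv
      rcases le_or_gt (δ v) 0 with h | h
      · rw [hz' v]
        have h2 : tb * δ v ≤ 0 := mul_nonpos_of_nonneg_of_nonpos (le_of_lt htbpos) h
        linarith
      · have hmem : (1/(n:ℝ) - z v)/δ v ∈ ts := Finset.mem_union_right _
          (Finset.mem_image.2 ⟨v, Finset.mem_filter.2 ⟨mem_univ v, hv, h⟩, rfl⟩)
        have h2 := htbmin _ hmem
        rw [hz' v]
        have h3 := (le_div_iff₀ h).1 h2
        linarith
    have hG' : Gf (1/(n:ℝ)) (Zed σv l') = D := by
      rw [← hzD]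
      apply Finset.sum_congr rfl
      intro v _
      rcases le_or_gt (1/(n:ℝ)) (z v) with h | h
      · rw [hWfix v h]
      · have h1 : max (Zed σv l' v - 1/(n:ℝ)) 0 = 0 := max_eq_right (by linarith [hle' v h])
        have h2 : max (z v - 1/(n:ℝ)) 0 = 0 := max_eq_right (by linarith)
        rw [h1, h2]
    rcases Finset.mem_union.1 htbmem with hA | hB
    · obtain ⟨i, hi, heq⟩ := Finset.mem_image.1 hA
      have hγi := (Finset.mem_filter.1 hi).2
      have hzero : l' i = 0 := by
        simp only [hl']
        rw [← heq]
        have hne : -γ i ≠ 0 := neg_ne_zero.2 (ne_of_lt hγi)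
        have h4 : lm i / -γ i * γ i = -lm i := by
          field_simp
          rw [mul_div_assoc, div_self (ne_of_lt hγi), mul_one]
        rw [h4]; ring
      exact (h0 l' hl'Δ (le_of_eq hG') i) hzero
    · obtain ⟨v, hv, heq⟩ := Finset.mem_image.1 hB
      obtain ⟨hv1, hv2⟩ := (Finset.mem_filter.1 hv).2
      have hnew : Zed σv l' v = 1/(n:ℝ) := by
        rw [hz' v, ← heq]
        have hne : δ v ≠ 0 := ne_of_gt hv2
        have h4 : (1/(n:ℝ) - z v) / δ v * δ v = 1/(n:ℝ) - z v := by
          field_simp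
        rw [h4]; ring
      have hsub2 : univ.filter (fun w => Zed σv lm w = 1/(n:ℝ)) ⊂
          univ.filter (fun w => Zed σv l' w = 1/(n:ℝ)) := by
        refine ⟨?_, ?_⟩
        · intro w hw
          have hzw : Zed σv lm w = 1/(n:ℝ) := (Finset.mem_filter.1 hw).2
          have hzw' : (1:ℝ)/(n:ℝ) ≤ z w := le_of_eq hzw.symm
          refine Finset.mem_filter.2 ⟨mem_univ w, ?_⟩
          rw [hWfix w hzw']
          exact hzw
        · intro hcon
          have := hcon (Finset.mem_filter.2 ⟨mem_univ v, hnew⟩)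
          have hzv : Zed σv lm v = 1/(n:ℝ) := (Finset.mem_filter.1 this).2
          have hzv' : z v = 1/(n:ℝ) := by rw [hzdef]; exact hzv
          rw [hzv'] at hv1
          exact lt_irrefl _ hv1
      have h1 : Tc l' ≤ Tc lm := hlmTc l' hl'Δ (le_of_eq hG')
      have h2 : Tc lm < Tc l' := by
        simp only [hTc]
        exact Finset.card_lt_card hsub2
      omega
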